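/- Let ω ∈ ℝ \ {0} and let W : ℝ → ℝ be continuous. Let η₁, η₂ : ℝ → ℂ be twice continuously differentiable solutions of η'' + ω²η = Wη satisfying the asymptotic boundary conditions lim_{s→−∞} e^{iωs}η₁(s) = 1, lim_{s→−∞} (e^{iωs}η₁(s))' = 0, lim_{s→∞} e^{−iωs}η₂(s) = 1, and lim_{s→∞} (e^{−iωs}η₂(s))' = 0. Then the Wronskian w(η₁,η₂) := η₁η₂' − η₁'η₂ is nonzero (at every point of ℝ); in particular η₁ and η₂ are linearly independent. -/

import Mathlib

open Set Filter MeasureTheory Topology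

/-- The "self-Wronskian" `η η̄' − η' η̄` of a solution of `η'' = (W − ω²) η` with real
`W`, `ω` is constant. -/
lemma jost_selfWronskian_const (ω : ℝ) (W : ℝ → ℝ) (η : ℝ → ℂ) (h : ContDiff ℝ 2 η)
    (heq : ∀ s : ℝ, deriv (deriv η) s + (ω : ℂ) ^ 2 * η s = (W s : ℂ) * η s) :
    ∀ s t : ℝ,
      η s * star (deriv η s) - deriv η s * star (η s)
        = η t * star (deriv η t) - deriv η t * star (η t) := by
  have hd : Differentiable ℝ η := h.differentiable (by norm_num)
  have hd' : Differentiable ℝ (deriv η) := by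
    have h2 : ContDiff ℝ (1 + 1) η := by rw [one_add_one_eq_two]; exact h
    exact ((contDiff_succ_iff_deriv.mp h2).2.2).differentiable (by simp)
  have heq' : ∀ s : ℝ, deriv (deriv η) s = ((W s : ℂ) - (ω : ℂ) ^ 2) * η s := by
    intro s; have := heq s; ring_nf; ring_nf at this; linear_combination this
  set A : ℝ → ℂ := fun s => η s * star (deriv η s) - deriv η s * star (η s) with hA
  have key : ∀ s : ℝ, HasDerivAt A 0 s := by
    intro s
    have h1 : HasDerivAt η (deriv η s) s := (hd s).hasDerivAt
    have h2 : HasDerivAt (deriv η) (deriv (deriv η) s) s := (hd' s).hasDerivAt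
    have h3 : HasDerivAt A
        ((deriv η s * star (deriv η s) + η s * star (deriv (deriv η) s))
          - (deriv (deriv η) s * star (η s) + deriv η s * star (deriv η s))) s :=
      (h1.mul h2.star).sub (h2.mul h1.star)
    convert h3 using 1
    rw [heq' s]
    simp only [star_mul', Complex.star_def, map_sub, map_pow, Complex.conj_ofReal]
    ring
  have hAdiff : Differentiable ℝ A := fun s => (key s).differentiableAt
  have hAderiv : ∀ s : ℝ, deriv A s = 0 := fun s => (key s).deriv
  intro s t
  exact is_const_of_deriv_eq_zero hAdiff hAderiv s t

theorem jost_wronskian_nonzero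
    (ω : ℝ) (hω : ω ≠ 0) (W : ℝ → ℝ) (hWc : Continuous W)
    (η₁ η₂ : ℝ → ℂ) (h₁ : ContDiff ℝ 2 η₁) (h₂ : ContDiff ℝ 2 η₂)
    (heq₁ : ∀ s : ℝ, deriv (deriv η₁) s + (ω : ℂ) ^ 2 * η₁ s = (W s : ℂ) * η₁ s)
    (heq₂ : ∀ s : ℝ, deriv (deriv η₂) s + (ω : ℂ) ^ 2 * η₂ s = (W s : ℂ) * η₂ s)
    (hbc₁ : Tendsto (fun s : ℝ => Complex.exp (Complex.I * ω * s) * η₁ s) atBot (𝓝 1))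
    (hbc₁' : Tendsto (deriv fun s : ℝ => Complex.exp (Complex.I * ω * s) * η₁ s)
      atBot (𝓝 0))
    (hbc₂ : Tendsto (fun s : ℝ => Complex.exp (-(Complex.I * ω * s)) * η₂ s) atTop (𝓝 1))
    (hbc₂' : Tendsto (deriv fun s : ℝ => Complex.exp (-(Complex.I * ω * s)) * η₂ s)
      atTop (𝓝 0)) :
    (∀ s : ℝ, η₁ s * deriv η₂ s - deriv η₁ s * η₂ s ≠ 0) ∧
    LinearIndependent ℂ ![η₁, η₂] := by
  have hd₁ : Differentiable ℝ η₁ := h₁.differentiable (by norm_num)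
  have hd₂ : Differentiable ℝ η₂ := h₂.differentiable (by norm_num)
  have hIω : Complex.I * (ω : ℂ) ≠ 0 :=
    mul_ne_zero Complex.I_ne_zero (by exact_mod_cast hω)
  -- exponentials
  have hE₁ : ∀ s : ℝ, HasDerivAt (fun s : ℝ => Complex.exp (Complex.I * ω * s))
      (Complex.I * ω * Complex.exp (Complex.I * ω * s)) s := by
    intro s
    have h0 : HasDerivAt (fun z : ℂ => Complex.I * ω * z) (Complex.I * ω) (s : ℂ) := by
      simpa using (hasDerivAt_id (s : ℂ)).const_mul (Complex.I * (ω : ℂ))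
    have : HasDerivAt (fun z : ℂ => Complex.exp (Complex.I * ω * z))
        (Complex.exp (Complex.I * ω * s) * (Complex.I * ω)) (s : ℂ) := h0.cexp
    have := this.comp_ofReal
    simpa [mul_comm] using this
  have hE₂ : ∀ s : ℝ, HasDerivAt (fun s : ℝ => Complex.exp (-(Complex.I * ω * s)))
      (-(Complex.I * ω) * Complex.exp (-(Complex.I * ω * s))) s := by
    intro s
    have : HasDerivAt (fun z : ℂ => Complex.exp (-(Complex.I * ω * z)))
        (Complex.exp (-(Complex.I * ω * s)) * -(Complex.I * ω)) (s : ℂ) := by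
      have : HasDerivAt (fun z : ℂ => -(Complex.I * ω * z)) (-(Complex.I * ω)) (s : ℂ) := by
        have h0 := ((hasDerivAt_id (s : ℂ)).const_mul (Complex.I * (ω : ℂ))).neg
        rw [mul_one] at h0; exact h0
      exact this.cexp
    have := this.comp_ofReal
    simpa [mul_comm] using this
  -- derivative of the boundary-condition functions
  have hder₁ : ∀ s : ℝ,
      deriv (fun s : ℝ => Complex.exp (Complex.I * ω * s) * η₁ s) s
        = Complex.I * ω * Complex.exp (Complex.I * ω * s) * η₁ s
          + Complex.exp (Complex.I * ω * s) * deriv η₁ s := by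
    intro s
    exact ((hE₁ s).mul (hd₁ s).hasDerivAt).deriv
  have hder₂ : ∀ s : ℝ,
      deriv (fun s : ℝ => Complex.exp (-(Complex.I * ω * s)) * η₂ s) s
        = -(Complex.I * ω) * Complex.exp (-(Complex.I * ω * s)) * η₂ s
          + Complex.exp (-(Complex.I * ω * s)) * deriv η₂ s := by
    intro s
    exact ((hE₂ s).mul (hd₂ s).hasDerivAt).deriv
  -- limit of `e^{iωs} η₁'` at −∞
  have hq₁ : Tendsto (fun s : ℝ => Complex.exp (Complex.I * ω * s) * deriv η₁ s)
      atBot (𝓝 (-(Complex.I * ω))) := by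
    have h := hbc₁'.sub (hbc₁.const_mul (Complex.I * ω))
    have heqfun : (fun s : ℝ =>
        deriv (fun s : ℝ => Complex.exp (Complex.I * ω * s) * η₁ s) s
          - Complex.I * ω * (Complex.exp (Complex.I * ω * s) * η₁ s))
        = fun s : ℝ => Complex.exp (Complex.I * ω * s) * deriv η₁ s := by
      funext s; rw [hder₁ s]; ring
    rw [heqfun] at h
    simpa using h
  -- limit of `e^{-iωs} η₂'` at +∞
  have hq₂ : Tendsto (fun s : ℝ => Complex.exp (-(Complex.I * ω * s)) * deriv η₂ s)
      atTop (𝓝 (Complex.I * ω)) := by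
    have h := hbc₂'.add (hbc₂.const_mul (Complex.I * ω))
    have heqfun : (fun s : ℝ =>
        deriv (fun s : ℝ => Complex.exp (-(Complex.I * ω * s)) * η₂ s) s
          + Complex.I * ω * (Complex.exp (-(Complex.I * ω * s)) * η₂ s))
        = fun s : ℝ => Complex.exp (-(Complex.I * ω * s)) * deriv η₂ s := by
      funext s; rw [hder₂ s]; ring
    rw [heqfun] at h
    simpa using h
  -- the self-Wronskians, written via the boundary functions
  have hconj_exp : ∀ s : ℝ, star (Complex.exp (Complex.I * ω * s))
      = Complex.exp (-(Complex.I * ω * s)) := by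
    intro s
    rw [Complex.star_def, ← Complex.exp_conj]
    congr 1
    simp [Complex.conj_ofReal]
  have hA₁rw : ∀ s : ℝ,
      η₁ s * star (deriv η₁ s) - deriv η₁ s * star (η₁ s)
        = (Complex.exp (Complex.I * ω * s) * η₁ s)
            * star (Complex.exp (Complex.I * ω * s) * deriv η₁ s)
          - (Complex.exp (Complex.I * ω * s) * deriv η₁ s)
            * star (Complex.exp (Complex.I * ω * s) * η₁ s) := by
    intro s
    have hEE : Complex.exp (Complex.I * ω * s) * star (Complex.exp (Complex.I * ω * s))
        = 1 := by
      rw [hconj_exp s, ← Complex.exp_add]; simp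
    simp only [star_mul']
    calc η₁ s * star (deriv η₁ s) - deriv η₁ s * star (η₁ s)
        = (Complex.exp (Complex.I * ω * s) * star (Complex.exp (Complex.I * ω * s)))
            * (η₁ s * star (deriv η₁ s))
          - (Complex.exp (Complex.I * ω * s) * star (Complex.exp (Complex.I * ω * s)))
            * (deriv η₁ s * star (η₁ s)) := by rw [hEE]; ring
      _ = _ := by ring
  have hA₂rw : ∀ s : ℝ,
      η₂ s * star (deriv η₂ s) - deriv η₂ s * star (η₂ s)
        = (Complex.exp (-(Complex.I * ω * s)) * η₂ s)
            * star (Complex.exp (-(Complex.I * ω * s)) * deriv η₂ s)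
          - (Complex.exp (-(Complex.I * ω * s)) * deriv η₂ s)
            * star (Complex.exp (-(Complex.I * ω * s)) * η₂ s) := by
    intro s
    have hEE : Complex.exp (-(Complex.I * ω * s)) * star (Complex.exp (-(Complex.I * ω * s)))
        = 1 := by
      have : star (Complex.exp (-(Complex.I * ω * s))) = Complex.exp (Complex.I * ω * s) := by
        rw [Complex.star_def, ← Complex.exp_conj]
        congr 1
        simp [Complex.conj_ofReal]
      rw [this, ← Complex.exp_add]; simp
    simp only [star_mul']
    calc η₂ s * star (deriv η₂ s) - deriv η₂ s * star (η₂ s)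
        = (Complex.exp (-(Complex.I * ω * s)) * star (Complex.exp (-(Complex.I * ω * s))))
            * (η₂ s * star (deriv η₂ s))
          - (Complex.exp (-(Complex.I * ω * s)) * star (Complex.exp (-(Complex.I * ω * s))))
            * (deriv η₂ s * star (η₂ s)) := by rw [hEE]; ring
      _ = _ := by ring
  -- limits of the self-Wronskians
  have hA₁lim : Tendsto (fun s : ℝ =>
      η₁ s * star (deriv η₁ s) - deriv η₁ s * star (η₁ s)) atBot
      (𝓝 (2 * (Complex.I * ω))) := by
    have h := (hbc₁.mul hq₁.star).sub (hq₁.mul hbc₁.star)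
    have : (1 : ℂ) * star (-(Complex.I * ω)) - -(Complex.I * ω) * star (1 : ℂ)
        = 2 * (Complex.I * ω) := by
      simp [Complex.star_def, Complex.conj_ofReal]; ring
    rw [this] at h
    refine h.congr fun s => (hA₁rw s).symm
  have hA₂lim : Tendsto (fun s : ℝ =>
      η₂ s * star (deriv η₂ s) - deriv η₂ s * star (η₂ s)) atTop
      (𝓝 (-(2 * (Complex.I * ω)))) := by
    have h := (hbc₂.mul hq₂.star).sub (hq₂.mul hbc₂.star)
    have : (1 : ℂ) * star (Complex.I * ω) - Complex.I * ω * star (1 : ℂ)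
        = -(2 * (Complex.I * ω)) := by
      simp [Complex.star_def, Complex.conj_ofReal]; ring
    rw [this] at h
    refine h.congr fun s => (hA₂rw s).symm
  -- constancy gives the exact values everywhere
  have hC₁ := jost_selfWronskian_const ω W η₁ h₁ heq₁
  have hC₂ := jost_selfWronskian_const ω W η₂ h₂ heq₂
  have hA₁ : ∀ s : ℝ, η₁ s * star (deriv η₁ s) - deriv η₁ s * star (η₁ s)
      = 2 * (Complex.I * ω) := by
    intro s
    have hconst : Tendsto (fun t : ℝ =>
        η₁ t * star (deriv η₁ t) - deriv η₁ t * star (η₁ t)) atBot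
        (𝓝 (η₁ s * star (deriv η₁ s) - deriv η₁ s * star (η₁ s))) := by
      have : (fun t : ℝ => η₁ t * star (deriv η₁ t) - deriv η₁ t * star (η₁ t))
          = fun _ => η₁ s * star (deriv η₁ s) - deriv η₁ s * star (η₁ s) :=
        funext fun t => hC₁ t s
      rw [this]; exact tendsto_const_nhds
    exact tendsto_nhds_unique hconst hA₁lim
  have hA₂ : ∀ s : ℝ, η₂ s * star (deriv η₂ s) - deriv η₂ s * star (η₂ s)
      = -(2 * (Complex.I * ω)) := by
    intro s
    have hconst : Tendsto (fun t : ℝ =>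
        η₂ t * star (deriv η₂ t) - deriv η₂ t * star (η₂ t)) atTop
        (𝓝 (η₂ s * star (deriv η₂ s) - deriv η₂ s * star (η₂ s))) := by
      have : (fun t : ℝ => η₂ t * star (deriv η₂ t) - deriv η₂ t * star (η₂ t))
          = fun _ => η₂ s * star (deriv η₂ s) - deriv η₂ s * star (η₂ s) :=
        funext fun t => hC₂ t s
      rw [this]; exact tendsto_const_nhds
    exact tendsto_nhds_unique hconst hA₂lim
  have h2Iω : (2 : ℂ) * (Complex.I * ω) ≠ 0 := mul_ne_zero two_ne_zero hIω
  -- η₁ never vanishes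
  have hη₁ne : ∀ s : ℝ, η₁ s ≠ 0 := by
    intro s hzero
    exact h2Iω (by rw [← hA₁ s, hzero]; simp)
  -- main nonvanishing claim
  have hmain : ∀ s : ℝ, η₁ s * deriv η₂ s - deriv η₁ s * η₂ s ≠ 0 := by
    intro s h0
    set c : ℂ := η₂ s / η₁ s with hc
    have hη₂s : η₂ s = c * η₁ s := (div_mul_cancel₀ (η₂ s) (hη₁ne s)).symm
    have hη₂s' : deriv η₂ s = c * deriv η₁ s := by
      have h0' : η₁ s * deriv η₂ s = deriv η₁ s * η₂ s := by linear_combination h0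
      rw [hη₂s] at h0'
      have := mul_left_cancel₀ (hη₁ne s) (by linear_combination h0' : η₁ s * deriv η₂ s
        = η₁ s * (c * deriv η₁ s))
      exact this
    have hrel : η₂ s * star (deriv η₂ s) - deriv η₂ s * star (η₂ s)
        = (c * star c) * (η₁ s * star (deriv η₁ s) - deriv η₁ s * star (η₁ s)) := by
      rw [hη₂s, hη₂s']
      simp only [star_mul']
      ring
    rw [hA₁ s, hA₂ s] at hrel
    have hcc : c * star c = (Complex.normSq c : ℂ) := by
      rw [Complex.star_def, Complex.mul_conj]
    rw [hcc] at hrel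
    have : ((Complex.normSq c : ℂ) + 1) * (2 * (Complex.I * ω)) = 0 := by
      linear_combination -hrel
    have h1 : (Complex.normSq c : ℂ) + 1 = 0 := by
      rcases mul_eq_zero.mp this with h | h
      · exact h
      · exact absurd h h2Iω
    have h2 : ((Complex.normSq c + 1 : ℝ) : ℂ) = ((0 : ℝ) : ℂ) := by push_cast; exact h1
    have h3 : Complex.normSq c + 1 = 0 := Complex.ofReal_injective h2
    nlinarith [Complex.normSq_nonneg c]
  refine ⟨hmain, ?_⟩
  -- linear independence
  rw [LinearIndependent.pair_iff]
  intro a b hab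
  have hab0 : ∀ s : ℝ, a * η₁ s + b * η₂ s = 0 := by
    intro s
    have := congrFun hab s
    simpa [smul_eq_mul] using this
  have hab0' : ∀ s : ℝ, a * deriv η₁ s + b * deriv η₂ s = 0 := by
    intro s
    have hfn : (fun s : ℝ => a * η₁ s + b * η₂ s) = fun _ => (0 : ℂ) :=
      funext hab0
    have hder : HasDerivAt (fun s : ℝ => a * η₁ s + b * η₂ s)
        (a * deriv η₁ s + b * deriv η₂ s) s :=
      ((hd₁ s).hasDerivAt.const_mul a).add ((hd₂ s).hasDerivAt.const_mul b)
    rw [hfn] at hder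
    exact hder.unique (hasDerivAt_const s 0)
  have hw0 := hmain 0
  have ha : a * (η₁ 0 * deriv η₂ 0 - deriv η₁ 0 * η₂ 0) = 0 := by
    linear_combination deriv η₂ 0 * hab0 0 - η₂ 0 * hab0' 0
  have hb : b * (η₁ 0 * deriv η₂ 0 - deriv η₁ 0 * η₂ 0) = 0 := by
    linear_combination η₁ 0 * hab0' 0 - deriv η₁ 0 * hab0 0
  constructor
  · exact (mul_eq_zero.mp ha).resolve_right hw0
  · exact (mul_eq_zero.mp hb).resolve_right hw0
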